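/- (Structure-constant recursion in the proof of Lemma 3.7) Define rational numbers a(k; n_0, …, n_k) for k ≥ 0 and integers n_0, …, n_k by a(0; n_0) = 1 and the recursion a(k+1; n_0, …, n_{k+1}) = −Σ_{i=1}^{k+1} [ a(k; n_0, …, n_{i−1}, n_{i+1}, …, n_{k+1}) · (Σ_{ℓ=0}^{k+1} n_ℓ − n_i) · n_i − Σ_{j=i+1}^{k+1} n_i·n_j · a(k; n_0, …, n_{i−1}, n_{i+1}, …, n_{j−1}, n_i+n_j, n_{j+1}, …, n_{k+1}) ]. Then for all k ≥ 0 and all integers n_0, …, n_k one has a(k; n_0, …, n_k) = (−1)^k · k! · n_0^k · n_1⋯n_k. -/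
import Mathlib


open scoped BigOperators

/-- Remove the entry at index `i` from the tuple `n` (entries after `i` shift down). -/
def removeAt' (i : ℕ) (n : ℕ → ℤ) : ℕ → ℤ := fun t => if t < i then n t else n (t + 1)

/-- Replace the entry at index `j` of the tuple `n` by `v`. -/
def updateAt' (j : ℕ) (v : ℤ) (n : ℕ → ℤ) : ℕ → ℤ := fun t => if t = j then v else n t

namespace SCaux

def e (i l : ℕ) : ℕ := if l < i then l else l + 1

lemma e_inj (i : ℕ) : Function.Injective (e i) := by
  intro a b h
  unfold e at h
  split_ifs at h <;> omega

lemma image_e_Icc {i k : ℕ} (h1 : 1 ≤ i) (h2 : i ≤ k + 1) :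
    (Finset.Icc 1 k).image (e i) = (Finset.Icc 1 (k+1)).erase i := by
  ext m
  simp only [Finset.mem_image, Finset.mem_erase, Finset.mem_Icc, e]
  constructor
  · rintro ⟨l, ⟨hl1, hl2⟩, rfl⟩
    split_ifs <;> omega
  · rintro ⟨hm, h1m, h2m⟩
    by_cases hmi : m < i
    · exact ⟨m, ⟨h1m, by omega⟩, by simp only [if_pos hmi]⟩
    · refine ⟨m - 1, ⟨by omega, by omega⟩, ?_⟩
      split_ifs <;> omega

lemma removeAt'_eq (i : ℕ) (n : ℕ → ℤ) (l : ℕ) : removeAt' i n l = n (e i l) := by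
  unfold removeAt' e; split_ifs <;> rfl

lemma prod_removeAt (n : ℕ → ℤ) {i k : ℕ} (h1 : 1 ≤ i) (h2 : i ≤ k + 1) :
    ∏ l ∈ Finset.Icc 1 k, ((removeAt' i n l : ℤ) : ℚ)
      = ∏ l ∈ (Finset.Icc 1 (k+1)).erase i, ((n l : ℤ) : ℚ) := by
  rw [← image_e_Icc h1 h2,
    Finset.prod_image (fun a _ b _ h => e_inj i h)]
  exact Finset.prod_congr rfl fun l _ => by rw [removeAt'_eq]

lemma prod_removeAt_erase (n : ℕ → ℤ) {i j k : ℕ} (h1 : 1 ≤ i) (hij : i < j) (h2 : j ≤ k + 1) :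
    ∏ l ∈ (Finset.Icc 1 k).erase (j-1), ((removeAt' i n l : ℤ) : ℚ)
      = ∏ l ∈ ((Finset.Icc 1 (k+1)).erase i).erase j, ((n l : ℤ) : ℚ) := by
  have hej : e i (j - 1) = j := by
    unfold e; split_ifs <;> omega
  have himg : ((Finset.Icc 1 k).erase (j-1)).image (e i)
      = ((Finset.Icc 1 (k+1)).erase i).erase j := by
    rw [Finset.image_erase (e_inj i), image_e_Icc h1 (by omega), hej]
  rw [← himg, Finset.prod_image (fun a _ b _ h => e_inj i h)]
  exact Finset.prod_congr rfl fun l _ => by rw [removeAt'_eq]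

lemma pairsum (g : ℕ → ℚ) (m : ℕ) :
    ∑ i ∈ Finset.Icc 1 m, ∑ j ∈ Finset.Icc (i+1) m, (g i + g j)
      = ((m : ℚ) - 1) * ∑ i ∈ Finset.Icc 1 m, g i := by
  induction m with
  | zero => simp
  | succ m ih =>
    rw [Finset.sum_Icc_succ_top (by omega : 1 ≤ m+1)]
    have hin : ∀ i ∈ Finset.Icc 1 m,
        ∑ j ∈ Finset.Icc (i+1) (m+1), (g i + g j)
          = (∑ j ∈ Finset.Icc (i+1) m, (g i + g j)) + (g i + g (m+1)) := by
      intro i hi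
      simp only [Finset.mem_Icc] at hi
      exact Finset.sum_Icc_succ_top (by omega) _
    rw [Finset.sum_congr rfl hin, Finset.sum_add_distrib, ih]
    have hempty : Finset.Icc (m+1+1) (m+1) = ∅ := by
      rw [Finset.Icc_eq_empty]; omega
    rw [hempty, Finset.sum_empty, Finset.sum_add_distrib, Finset.sum_const, Nat.card_Icc,
      Finset.sum_Icc_succ_top (by omega : 1 ≤ m+1) g]
    simp only [nsmul_eq_mul]
    push_cast [Nat.add_sub_cancel]
    ring

lemma range_split (g : ℕ → ℚ) (m : ℕ) :
    ∑ l ∈ Finset.range (m+1), g l = g 0 + ∑ l ∈ Finset.Icc 1 m, g l := by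
  induction m with
  | zero => simp
  | succ m ih =>
    rw [Finset.sum_range_succ, ih, Finset.sum_Icc_succ_top (by omega : 1 ≤ m+1) g]
    ring

lemma key_scalar' (g : ℕ → ℚ) (k : ℕ) :
    ∑ i ∈ Finset.Icc 1 (k+1),
      ((∑ l ∈ Finset.range (k+2), g l) - g i - ∑ j ∈ Finset.Icc (i+1) (k+1), (g i + g j))
    = ((k:ℚ)+1) * g 0 := by
  rw [Finset.sum_sub_distrib, Finset.sum_sub_distrib, pairsum, Finset.sum_const, Nat.card_Icc,
    range_split]
  simp only [nsmul_eq_mul]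
  push_cast [Nat.add_sub_cancel]
  ring

lemma key_scalar (n : ℕ → ℤ) (k : ℕ) :
    ∑ i ∈ Finset.Icc 1 (k+1),
      ((∑ l ∈ Finset.range (k+2), (n l : ℚ)) - (n i : ℚ)
        - ∑ j ∈ Finset.Icc (i+1) (k+1), ((n i : ℚ) + (n j : ℚ)))
    = ((k:ℚ)+1) * (n 0 : ℚ) :=
  key_scalar' (fun l => (n l : ℚ)) k

end SCaux

/-- The structure constants `a(k; n₀, …, n_k)` of the proof of Lemma 3.7:
`a(0; n₀) = 1` and
`a(k+1; n₀, …, n_{k+1}) = -Σ_{i=1}^{k+1} [ a(k; n₀,…,n̂ᵢ,…,n_{k+1})·(Σ_ℓ n_ℓ - nᵢ)·nᵢ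
  - Σ_{j=i+1}^{k+1} nᵢ·n_j · a(k; n₀,…,n̂ᵢ,…,n_{j-1}, nᵢ+n_j, n_{j+1},…,n_{k+1}) ]`. -/
def aConst : ℕ → (ℕ → ℤ) → ℚ
  | 0, _ => 1
  | k + 1, n =>
      -∑ i ∈ Finset.Icc 1 (k + 1),
        (aConst k (removeAt' i n) * (((∑ l ∈ Finset.range (k + 2), n l) - n i : ℤ) : ℚ)
            * (n i : ℚ)
          - ∑ j ∈ Finset.Icc (i + 1) (k + 1),
              (n i : ℚ) * (n j : ℚ) * aConst k (updateAt' (j - 1) (n i + n j) (removeAt' i n)))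

/-- **The structure-constant recursion in the proof of Lemma 3.7:**
`a(k; n₀, …, n_k) = (-1)^k · k! · n₀^k · n₁⋯n_k`. -/
theorem structure_constant_recursion (k : ℕ) (n : ℕ → ℤ) :
    aConst k n
      = (-1 : ℚ) ^ k * (Nat.factorial k : ℚ) * (n 0 : ℚ) ^ k *
          ∏ i ∈ Finset.Icc 1 k, (n i : ℚ) := by
  induction k generalizing n with
  | zero => simp [aConst]
  | succ k ih =>
    have hsum :
        ∀ i ∈ Finset.Icc 1 (k+1),
          (aConst k (removeAt' i n) * (((∑ l ∈ Finset.range (k + 2), n l) - n i : ℤ) : ℚ)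
              * (n i : ℚ)
            - ∑ j ∈ Finset.Icc (i + 1) (k + 1),
                (n i : ℚ) * (n j : ℚ) * aConst k (updateAt' (j - 1) (n i + n j) (removeAt' i n)))
          = ((-1:ℚ)^k * (Nat.factorial k : ℚ) * (n 0:ℚ)^k * ∏ l ∈ Finset.Icc 1 (k+1), (n l : ℚ))
            * ((∑ l ∈ Finset.range (k+2), (n l : ℚ)) - (n i : ℚ)
               - ∑ j ∈ Finset.Icc (i+1) (k+1), ((n i : ℚ) + (n j : ℚ))) := by
      intro i hi
      simp only [Finset.mem_Icc] at hi
      obtain ⟨hi1, hi2⟩ := hi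
      have hmem : i ∈ Finset.Icc 1 (k+1) := Finset.mem_Icc.mpr ⟨hi1, hi2⟩
      set Q : ℚ := ∏ l ∈ (Finset.Icc 1 (k+1)).erase i, ((n l : ℤ) : ℚ) with hQdef
      have hQ : (n i : ℚ) * Q = ∏ l ∈ Finset.Icc 1 (k+1), (n l : ℚ) := by
        rw [hQdef]
        exact Finset.mul_prod_erase (Finset.Icc 1 (k+1)) (fun l => ((n l : ℤ) : ℚ)) hmem
      have h0 : removeAt' i n 0 = n 0 := by
        unfold removeAt'; rw [if_pos (by omega : (0:ℕ) < i)]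
      have hA : aConst k (removeAt' i n)
          = (-1:ℚ)^k * (Nat.factorial k : ℚ) * (n 0:ℚ)^k * Q := by
        rw [ih, h0, SCaux.prod_removeAt n hi1 hi2]
      have hB : ∀ j ∈ Finset.Icc (i+1) (k+1),
          (n i : ℚ) * (n j : ℚ) * aConst k (updateAt' (j - 1) (n i + n j) (removeAt' i n))
            = ((-1:ℚ)^k * (Nat.factorial k : ℚ) * (n 0:ℚ)^k
                * ∏ l ∈ Finset.Icc 1 (k+1), (n l : ℚ))
              * ((n i : ℚ) + (n j : ℚ)) := by
        intro j hj
        simp only [Finset.mem_Icc] at hj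
        obtain ⟨hj1, hj2⟩ := hj
        have hj1' : i < j := by omega
        have hu0 : updateAt' (j - 1) (n i + n j) (removeAt' i n) 0 = n 0 := by
          unfold updateAt'
          rw [if_neg (by omega : (0:ℕ) ≠ j - 1)]
          exact h0
        have hjm : (j - 1) ∈ Finset.Icc 1 k := Finset.mem_Icc.mpr ⟨by omega, by omega⟩
        have hprod : ∏ l ∈ Finset.Icc 1 k,
              ((updateAt' (j - 1) (n i + n j) (removeAt' i n) l : ℤ) : ℚ)
            = ((n i : ℚ) + (n j : ℚ))
              * ∏ l ∈ ((Finset.Icc 1 (k+1)).erase i).erase j, ((n l : ℤ) : ℚ) := by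
          rw [← Finset.mul_prod_erase _ _ hjm]
          have h1 : ((updateAt' (j - 1) (n i + n j) (removeAt' i n) (j-1) : ℤ) : ℚ)
              = (n i : ℚ) + (n j : ℚ) := by
            unfold updateAt'; rw [if_pos rfl]; push_cast; ring
          have h2 : ∏ l ∈ (Finset.Icc 1 k).erase (j-1),
                ((updateAt' (j - 1) (n i + n j) (removeAt' i n) l : ℤ) : ℚ)
              = ∏ l ∈ ((Finset.Icc 1 (k+1)).erase i).erase j, ((n l : ℤ) : ℚ) := by
            rw [← SCaux.prod_removeAt_erase n hi1 hj1' hj2]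
            refine Finset.prod_congr rfl fun l hl => ?_
            have hne : l ≠ j - 1 := (Finset.mem_erase.mp hl).1
            unfold updateAt'; rw [if_neg hne]
          rw [h1, h2]
        have hR : (n j : ℚ) * ∏ l ∈ ((Finset.Icc 1 (k+1)).erase i).erase j, ((n l : ℤ) : ℚ)
            = Q := by
          rw [hQdef]
          exact Finset.mul_prod_erase ((Finset.Icc 1 (k+1)).erase i)
            (fun l => ((n l : ℤ) : ℚ))
            (Finset.mem_erase.mpr ⟨by omega, Finset.mem_Icc.mpr ⟨by omega, hj2⟩⟩)
        rw [ih, hu0, hprod, ← hQ, ← hR]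
        ring
      rw [hA, Finset.sum_congr rfl hB, ← Finset.mul_sum, ← hQ]
      push_cast
      ring
    simp only [aConst]
    rw [Finset.sum_congr rfl hsum, ← Finset.mul_sum, SCaux.key_scalar n k, Nat.factorial_succ]
    push_cast
    ring
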